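/- arXiv:0805.0082 — 5 statements merged into one kernel-verified Lean document; each statement's English description precedes it below -/
import Mathlib

section
/- Let n ≥ 3 and let S be the set of triples (k, ℓ, m) of integers with ℓ ≥ 0, m ≥ 0, ℓ + 1 ≤ k ≤ n−1, m + 1 ≤ k, and ℓ + m ≤ n − 2. Then |S| > C(n,3) = n(n−1)(n−2)/6. -/
open Finset

/-- Hockey-stick helper: summing `(b-1).choose r` for `b ∈ [1, m]`. -/
lemma aux_sum_choose (r m : ℕ) : ∑ b ∈ Icc 1 m, (b - 1).choose r = m.choose (r + 1) := by
  induction m with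
  | zero => simp
  | succ m ih =>
    rw [← Finset.Ico_insert_right (by omega : 1 ≤ m + 1), Finset.Ico_add_one_right_eq_Icc,
      sum_insert (by simp), ih, Nat.choose_succ_succ']
    simp

/-- For `n ≥ 3`, the set `S` of triples `(k, ℓ, m)` of nonnegative integers with
`ℓ + 1 ≤ k ≤ n − 1`, `m + 1 ≤ k` and `ℓ + m ≤ n − 2` has cardinality strictly greater
than `C(n,3) = n(n−1)(n−2)/6`. -/
theorem stmt7 (n : ℕ) (hn : 3 ≤ n) :
    Nat.card {p : ℕ × ℕ × ℕ //
        p.2.1 + 1 ≤ p.1 ∧ p.1 ≤ n - 1 ∧ p.2.2 + 1 ≤ p.1 ∧ p.2.1 + p.2.2 ≤ n - 2}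
      > n.choose 3 ∧
    n.choose 3 = n * (n - 1) * (n - 2) / 6 := by
  constructor
  · -- the finset of elements of S
    set F : Finset (ℕ × ℕ × ℕ) :=
      ((range n) ×ˢ (range n) ×ˢ (range n)).filter
        (fun p => p.2.1 + 1 ≤ p.1 ∧ p.1 ≤ n - 1 ∧ p.2.2 + 1 ≤ p.1 ∧ p.2.1 + p.2.2 ≤ n - 2)
      with hF
    have hmemF : ∀ p : ℕ × ℕ × ℕ, p ∈ F ↔
        (p.2.1 + 1 ≤ p.1 ∧ p.1 ≤ n - 1 ∧ p.2.2 + 1 ≤ p.1 ∧ p.2.1 + p.2.2 ≤ n - 2) := by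
      intro p
      simp only [hF, mem_filter, mem_product, mem_range]
      omega
    -- the cardinality of the subtype equals F.card
    have hcard : Nat.card {p : ℕ × ℕ × ℕ //
        p.2.1 + 1 ≤ p.1 ∧ p.1 ≤ n - 1 ∧ p.2.2 + 1 ≤ p.1 ∧ p.2.1 + p.2.2 ≤ n - 2} = F.card := by
      have hset : {p : ℕ × ℕ × ℕ |
          p.2.1 + 1 ≤ p.1 ∧ p.1 ≤ n - 1 ∧ p.2.2 + 1 ≤ p.1 ∧ p.2.1 + p.2.2 ≤ n - 2}
          = (F : Set (ℕ × ℕ × ℕ)) := by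
        ext p
        simp only [Set.mem_setOf_eq, Finset.coe_filter, hmemF, Finset.mem_coe]
      calc Nat.card {p : ℕ × ℕ × ℕ //
            p.2.1 + 1 ≤ p.1 ∧ p.1 ≤ n - 1 ∧ p.2.2 + 1 ≤ p.1 ∧ p.2.1 + p.2.2 ≤ n - 2}
          = Nat.card {p : ℕ × ℕ × ℕ |
            p.2.1 + 1 ≤ p.1 ∧ p.1 ≤ n - 1 ∧ p.2.2 + 1 ≤ p.1 ∧ p.2.1 + p.2.2 ≤ n - 2} := rfl
        _ = F.card := by rw [hset]; exact Nat.card_eq_finsetCard F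
    rw [hcard]
    -- the finset of triples a > b > c ≥ 1 in [1, n], as a sigma type
    set T : Finset ((_ : ℕ) × (_ : ℕ) × ℕ) :=
      (Icc 1 n).sigma (fun a => (Icc 1 (a - 1)).sigma (fun b => Icc 1 (b - 1))) with hT
    have hmemT : ∀ x : (_ : ℕ) × (_ : ℕ) × ℕ, x ∈ T ↔
        (1 ≤ x.2.2 ∧ x.2.2 + 1 ≤ x.2.1 ∧ x.2.1 + 1 ≤ x.1 ∧ x.1 ≤ n) := by
      intro ⟨a, b, c⟩
      simp only [hT, mem_sigma, mem_Icc]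
      omega
    have hTcard : T.card = n.choose 3 := by
      rw [hT, card_sigma]
      have : ∀ a ∈ Icc 1 n,
          ((Icc 1 (a - 1)).sigma fun b => Icc 1 (b - 1)).card = (a - 1).choose 2 := by
        intro a _
        rw [card_sigma]
        calc ∑ b ∈ Icc 1 (a - 1), (Icc 1 (b - 1)).card
            = ∑ b ∈ Icc 1 (a - 1), (b - 1).choose 1 := by
              apply Finset.sum_congr rfl
              intro b _
              rw [Nat.card_Icc, Nat.choose_one_right]
              omega
          _ = (a - 1).choose 2 := aux_sum_choose 1 (a - 1)
      rw [Finset.sum_congr rfl this, aux_sum_choose 2 n]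
    -- the injection
    set g : ((_ : ℕ) × (_ : ℕ) × ℕ) → ℕ × ℕ × ℕ :=
      fun x => if x.2.1 + x.2.2 ≤ n then (x.1 - 1, x.2.1 - 1, x.2.2 - 1)
        else (n - x.2.2, n - x.1, n - x.2.1) with hg
    have hmaps : ∀ x ∈ T, g x ∈ F.erase (1, 0, 0) := by
      intro x hx
      rw [hmemT] at hx
      obtain ⟨a, b, c⟩ := x
      simp only at hx
      rw [hg]
      simp only
      split_ifs with h
      · rw [Finset.mem_erase, hmemF]
        refine ⟨?_, ?_⟩
        · simp only [ne_eq, Prod.mk.injEq, not_and]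
          intro _ h2
          omega
        · simp only
          omega
      · rw [Finset.mem_erase, hmemF]
        refine ⟨?_, ?_⟩
        · simp only [ne_eq, Prod.mk.injEq, not_and]
          intro _ h2
          omega
        · simp only
          omega
    have hinj : Set.InjOn g T := by
      intro x hx y hy hxy
      rw [Finset.mem_coe, hmemT] at hx hy
      obtain ⟨a, b, c⟩ := x
      obtain ⟨a', b', c'⟩ := y
      simp only at hx hy
      rw [hg] at hxy
      simp only at hxy
      have : a = a' ∧ b = b' ∧ c = c' := by
        split_ifs at hxy with h1 h2 h2 <;>
          simp only [Prod.mk.injEq] at hxy <;> omega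
      obtain ⟨rfl, rfl, rfl⟩ := this
      rfl
    have h1 : T.card ≤ (F.erase (1, 0, 0)).card :=
      Finset.card_le_card_of_injOn g hmaps hinj
    have h2 : (F.erase (1, 0, 0)).card < F.card := by
      apply Finset.card_erase_lt_of_mem
      rw [hmemF]
      simp only
      omega
    omega
  · rw [Nat.choose_eq_descFactorial_div_factorial]
    congr 1
    · show (n - 2) * ((n - 1) * (n * 1)) = n * (n - 1) * (n - 2)
      ring
end

section
/- The map f defined on 3-element subsets {a, b, c} ⊆ {1, …, n} with a > b > c by f({a,b,c}) = (a−1, b−1, c−1) if b + c ≤ n and f({a,b,c}) = (n−c, n−a, n−b) otherwise, is injective, takes values in the set S = {(k,ℓ,m) : ℓ,m ≥ 0, ℓ+1 ≤ k ≤ n−1, m+1 ≤ k, ℓ+m ≤ n−2}, and (1,0,0) ∈ S is not in the image of f. -/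
/-- The map `f` on 3-element subsets `{a > b > c}` of `{1,…,n}` given by
`f(a,b,c) = (a−1, b−1, c−1)` if `b + c ≤ n` and `(n−c, n−a, n−b)` otherwise,
takes values in `S = {(k,ℓ,m) : ℓ+1 ≤ k ≤ n−1, m+1 ≤ k, ℓ+m ≤ n−2}`, is injective,
and misses the element `(1,0,0)` of `S`. -/
theorem stmt8 (n : ℕ) (hn : 3 ≤ n) (f : ℕ × ℕ × ℕ → ℕ × ℕ × ℕ)
    (hf : ∀ a b c : ℕ,
      f (a, b, c) = if b + c ≤ n then (a - 1, b - 1, c - 1) else (n - c, n - a, n - b)) :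
    (∀ a b c : ℕ, 1 ≤ c → c < b → b < a → a ≤ n →
      (f (a, b, c)).2.1 + 1 ≤ (f (a, b, c)).1 ∧ (f (a, b, c)).1 ≤ n - 1 ∧
      (f (a, b, c)).2.2 + 1 ≤ (f (a, b, c)).1 ∧ (f (a, b, c)).2.1 + (f (a, b, c)).2.2 ≤ n - 2) ∧
    (∀ a b c a' b' c' : ℕ, 1 ≤ c → c < b → b < a → a ≤ n →
      1 ≤ c' → c' < b' → b' < a' → a' ≤ n →
      f (a, b, c) = f (a', b', c') → (a, b, c) = (a', b', c')) ∧
    (((1 : ℕ), (0 : ℕ), (0 : ℕ)).2.1 + 1 ≤ ((1 : ℕ), (0 : ℕ), (0 : ℕ)).1 ∧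
      ((1 : ℕ), (0 : ℕ), (0 : ℕ)).1 ≤ n - 1 ∧
      ((1 : ℕ), (0 : ℕ), (0 : ℕ)).2.2 + 1 ≤ ((1 : ℕ), (0 : ℕ), (0 : ℕ)).1 ∧
      ((1 : ℕ), (0 : ℕ), (0 : ℕ)).2.1 + ((1 : ℕ), (0 : ℕ), (0 : ℕ)).2.2 ≤ n - 2) ∧
    (∀ a b c : ℕ, 1 ≤ c → c < b → b < a → a ≤ n → f (a, b, c) ≠ (1, 0, 0)) := by
  refine ⟨?_, ?_, ?_, ?_⟩
  · intro a b c hc hcb hba han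
    rw [hf]
    split_ifs with h <;> simp <;> omega
  · intro a b c a' b' c' hc hcb hba han hc' hcb' hba' han' heq
    rw [hf, hf] at heq
    split_ifs at heq with h1 h2 h2 <;>
      simp only [Prod.mk.injEq] at heq ⊢ <;> omega
  · simp; omega
  · intro a b c hc hcb hba han
    rw [hf]
    split_ifs with h <;> simp only [Ne, Prod.mk.injEq, not_and] <;> omega
end

section
/- Let M be an m × k integer matrix each of whose rows is either (i) the zero row, (ii) a row all of whose entries are zero except one entry equal to 1 and one entry equal to −1, or (iii) a row containing an entry equal to 1 in some column j such that every other row of M has entry 0 in column j. Then the cokernel ℤ^k / (row space of M) is a torsion-free abelian group. -/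
open Finset Relation

private def stmt9gen {k : ℕ} (r : Fin k → Fin k → Prop) : Set (Fin k → ℤ) :=
  {y | ∃ j j', r j j' ∧ y = Pi.single j 1 - Pi.single j' 1}

private lemma stmt9diff {k : ℕ} {r : Fin k → Fin k → Prop} {j j' : Fin k}
    (h : EqvGen r j j') :
    Pi.single j 1 - Pi.single j' (1:ℤ) ∈ Submodule.span ℤ (stmt9gen r) := by
  induction h with
  | rel a b hab => exact Submodule.subset_span ⟨a, b, hab, rfl⟩
  | refl a => simp
  | symm a b _ ih => simpa using Submodule.neg_mem _ ih
  | trans a b c _ _ ih1 ih2 =>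
      have := Submodule.add_mem _ ih1 ih2
      rwa [sub_add_sub_cancel] at this

open Classical in
private lemma stmt9key {k : ℕ} (r : Fin k → Fin k → Prop) :
    ∀ (n : ℕ) (x : Fin k → ℤ), (∑ j, (x j).natAbs) = n →
    (∀ j0, ∑ j ∈ univ.filter (fun j => EqvGen r j j0), x j = 0) →
    x ∈ Submodule.span ℤ (stmt9gen r) := by
  intro n
  induction n using Nat.strong_induction_on with
  | _ n ih =>
    intro x hn h
    by_cases hx : x = 0
    · simp [hx]
    obtain ⟨j1, hj1⟩ : ∃ j1, x j1 ≠ 0 := by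
      by_contra hc; push_neg at hc; exact hx (funext fun j => hc j)
    have hcls := h j1
    obtain ⟨j2, hj2m, hj2⟩ : ∃ j2 ∈ univ.filter (fun j => EqvGen r j j1), 0 < x j2 := by
      by_contra hcon
      push_neg at hcon
      have hz := (Finset.sum_eq_zero_iff_of_nonpos (fun j hj => hcon j hj)).mp hcls
      have hj1mem : j1 ∈ univ.filter (fun j => EqvGen r j j1) := by
        simp [EqvGen.refl]
      exact hj1 (hz j1 hj1mem)
    obtain ⟨j3, hj3m, hj3⟩ : ∃ j3 ∈ univ.filter (fun j => EqvGen r j j1), x j3 < 0 := by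
      by_contra hcon
      push_neg at hcon
      have hz := (Finset.sum_eq_zero_iff_of_nonneg (fun j hj => hcon j hj)).mp hcls
      exact absurd (hz j2 hj2m) (by omega)
    have hj2j1 : EqvGen r j2 j1 := by simpa using hj2m
    have hj3j1 : EqvGen r j3 j1 := by simpa using hj3m
    have E23 : EqvGen r j2 j3 := hj2j1.trans _ _ _ (EqvGen.symm _ _ hj3j1)
    have hne : j2 ≠ j3 := by intro hEq; rw [hEq] at hj2; omega
    set y : Fin k → ℤ := fun j => x j - (Pi.single j2 1 : Fin k → ℤ) j + (Pi.single j3 1 : Fin k → ℤ) j with hy_def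
    have hy2 : y j2 = x j2 - 1 := by
      simp [hy_def, Pi.single_apply, hne]
    have hy3 : y j3 = x j3 + 1 := by
      simp [hy_def, Pi.single_apply, hne.symm]
    have hyother : ∀ j, j ≠ j2 → j ≠ j3 → y j = x j := by
      intro j h2 h3; simp [hy_def, Pi.single_apply, h2, h3]
    -- L1 norm decreases
    have hle : ∀ j, (y j).natAbs ≤ (x j).natAbs := by
      intro j
      by_cases h2 : j = j2
      · subst h2; rw [hy2]; omega
      by_cases h3 : j = j3
      · subst h3; rw [hy3]; omega
      · rw [hyother j h2 h3]
    have hlt : ∑ j, (y j).natAbs < n := by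
      rw [← hn]
      refine Finset.sum_lt_sum (fun j _ => hle j) ⟨j2, Finset.mem_univ _, ?_⟩
      rw [hy2]; omega
    -- class sums of y vanish
    have hy : ∀ j0, ∑ j ∈ univ.filter (fun j => EqvGen r j j0), y j = 0 := by
      intro j0
      have hiff : EqvGen r j2 j0 ↔ EqvGen r j3 j0 :=
        ⟨fun h => (EqvGen.symm _ _ E23).trans _ _ _ h, fun h => E23.trans _ _ _ h⟩
      have hsingle : ∀ (a : Fin k),
          ∑ j ∈ univ.filter (fun j => EqvGen r j j0), Pi.single a (1:ℤ) j
            = if EqvGen r a j0 then 1 else 0 := by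
        intro a
        simp only [Pi.single_apply]
        rw [Finset.sum_ite_eq' (univ.filter (fun j => EqvGen r j j0)) a (fun _ => (1:ℤ))]
        simp
      simp only [hy_def]
      rw [Finset.sum_add_distrib, Finset.sum_sub_distrib, h j0, hsingle, hsingle]
      by_cases h2 : EqvGen r j2 j0
      · rw [if_pos h2, if_pos (hiff.mp h2)]; ring
      · rw [if_neg h2, if_neg (fun h3 => h2 (hiff.mpr h3))]; ring
    have hy_mem := ih _ hlt y rfl hy
    have : x = y + (Pi.single j2 1 - Pi.single j3 1) := by
      funext j; simp [hy_def]
    rw [this]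
    exact Submodule.add_mem _ hy_mem (stmt9diff E23)

/-- If every row of an integer matrix `M` is either zero, or has exactly two nonzero
entries equal to `1` and `−1`, or contains an entry `1` in a column where every other row
vanishes, then the cokernel `ℤ^k / (row space of M)` is torsion-free. -/
theorem stmt9 (m k : ℕ) (M : Fin m → Fin k → ℤ)
    (hrows : ∀ i : Fin m,
      (M i = 0) ∨
      (∃ j j' : Fin k, j ≠ j' ∧ M i j = 1 ∧ M i j' = -1 ∧
        ∀ l : Fin k, l ≠ j → l ≠ j' → M i l = 0) ∨
      (∃ j : Fin k, M i j = 1 ∧ ∀ i' : Fin m, i' ≠ i → M i' j = 0)) :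
    ∀ (x : (Fin k → ℤ) ⧸ Submodule.span ℤ (Set.range M)) (c : ℤ),
      c ≠ 0 → c • x = 0 → x = 0 := by
  classical
  intro x c hc hcx
  obtain ⟨v, rfl⟩ := Submodule.Quotient.mk_surjective _ x
  rw [← Submodule.Quotient.mk_smul, Submodule.Quotient.mk_eq_zero] at hcx
  rw [Submodule.Quotient.mk_eq_zero]
  set N := Submodule.span ℤ (Set.range M) with hN
  obtain ⟨a, ha⟩ := (Submodule.mem_span_range_iff_exists_fun ℤ).mp hcx
  -- type (iii) predicate
  set T3 : Fin m → Prop := fun i => ∃ j, M i j = 1 ∧ ∀ i' : Fin m, i' ≠ i → M i' j = 0 with hT3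
  -- the pinned column
  set p : ∀ i, T3 i → Fin k := fun i h => Classical.choose h with hp
  -- coefficients of type (iii) rows are divisible by c
  have hdiv : ∀ i (h : T3 i), a i = c * v (p i h) := by
    intro i h
    obtain ⟨h1, h2⟩ := Classical.choose_spec h
    have : (∑ i', a i' • M i') (p i h) = (c • v) (p i h) := by rw [ha]
    simp only [Finset.sum_apply, Pi.smul_apply, smul_eq_mul] at this
    rw [Finset.sum_eq_single i (fun i' _ hne => by rw [h2 i' hne, mul_zero])
      (fun hmem => absurd (Finset.mem_univ i) hmem), h1, mul_one] at this
    rw [this]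
  set b : Fin m → ℤ := fun i => if h : T3 i then v (p i h) else 0 with hb
  set w : Fin k → ℤ := v - ∑ i, b i • M i with hw
  have hsumN : (∑ i, b i • M i) ∈ N := by
    exact Submodule.sum_mem _ fun i _ => Submodule.smul_mem _ _
      (Submodule.subset_span ⟨i, rfl⟩)
  have hcw : c • w = ∑ i, (a i - c * b i) • M i := by
    rw [hw, smul_sub, ← ha, Finset.smul_sum, ← Finset.sum_sub_distrib]
    congr 1; funext i
    rw [sub_smul, smul_smul]
  -- relation from type (ii) rows
  set r : Fin k → Fin k → Prop :=
    fun j j' => ∃ i, M i = Pi.single j 1 - Pi.single j' 1 with hr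
  have hgen : Submodule.span ℤ (stmt9gen r) ≤ N := by
    apply Submodule.span_le.mpr
    rintro y ⟨j, j', ⟨i, hi⟩, rfl⟩
    exact Submodule.subset_span ⟨i, hi⟩
  -- each non-T3 row has zero class sums
  have hrowsum : ∀ (i : Fin m) (j0 : Fin k), ¬ T3 i →
      ∑ j ∈ univ.filter (fun j => EqvGen r j j0), M i j = 0 := by
    intro i j0 hnT3
    rcases hrows i with h0 | ⟨j, j', hne, h1, h2, h3⟩ | h3
    · simp [h0]
    · have hMi : M i = Pi.single j 1 - Pi.single j' 1 := by
        funext l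
        by_cases hj : l = j
        · subst hj; simp [Pi.single_apply, hne.symm, h1]
        by_cases hj' : l = j'
        · subst hj'; simp [Pi.single_apply, hne, hj, h2]
        · simp [Pi.single_apply, hj, hj', h3 l hj hj']
      have hrjj' : r j j' := ⟨i, hMi⟩
      have hiff : EqvGen r j j0 ↔ EqvGen r j' j0 :=
        ⟨fun h => (EqvGen.symm _ _ (EqvGen.rel _ _ hrjj')).trans _ _ _ h,
         fun h => (EqvGen.rel _ _ hrjj').trans _ _ _ h⟩
      rw [hMi]
      have hsingle : ∀ (a : Fin k),
          ∑ l ∈ univ.filter (fun l => EqvGen r l j0), Pi.single a (1:ℤ) l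
            = if EqvGen r a j0 then 1 else 0 := by
        intro a
        simp only [Pi.single_apply]
        rw [Finset.sum_ite_eq' (univ.filter (fun l => EqvGen r l j0)) a (fun _ => (1:ℤ))]
        simp
      simp only [Pi.sub_apply]
      rw [Finset.sum_sub_distrib, hsingle, hsingle]
      by_cases hm : EqvGen r j j0
      · rw [if_pos hm, if_pos (hiff.mp hm)]; ring
      · rw [if_neg hm, if_neg (fun hm' => hm (hiff.mpr hm'))]; ring
    · exact absurd h3 hnT3
  -- class sums of w vanish
  have hwsum : ∀ j0, ∑ j ∈ univ.filter (fun j => EqvGen r j j0), w j = 0 := by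
    intro j0
    have : ∑ j ∈ univ.filter (fun j => EqvGen r j j0), (c • w) j = 0 := by
      rw [hcw]
      simp only [Finset.sum_apply, Pi.smul_apply, smul_eq_mul]
      rw [Finset.sum_comm]
      apply Finset.sum_eq_zero
      intro i _
      by_cases hT : T3 i
      · have : a i - c * b i = 0 := by
          rw [hb]; simp only [dif_pos hT]; rw [hdiv i hT]; ring
        simp [this]
      · rw [← Finset.mul_sum, hrowsum i j0 hT, mul_zero]
    simp only [Pi.smul_apply, smul_eq_mul, ← Finset.mul_sum] at this
    exact (mul_eq_zero.mp this).resolve_left hc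
  have hwmem : w ∈ N := hgen (stmt9key r _ w rfl hwsum)
  have : v = w + ∑ i, b i • M i := by rw [hw]; ring
  rw [this]
  exact Submodule.add_mem _ hwmem hsumN
end

section
/- Let F be the free group on a finite set X. The quotient [F,F]/[F,[F,F]] is a free abelian group, and the cosets of the commutators [x, y] for x, y ∈ X with x < y (for any fixed linear order on X) form a basis; in particular its rank is C(|X|, 2). -/
set_option linter.unusedSectionVars false
set_option maxHeartbeats 1000000

open scoped commutatorElement
open scoped IsMulCommutative

namespace Stmt14Aux

variable (X : Type) [Fintype X] [LinearOrder X]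

abbrev P := {p : X × X // p.1 < p.2}

def bee (a c : X → ℤ) : P X → ℤ := fun p => a p.1.1 * c p.1.2

@[ext] structure Hg where
  a : X → ℤ
  b : P X → ℤ

instance : Mul (Hg X) := ⟨fun g h => ⟨g.a + h.a, g.b + h.b + bee X g.a h.a⟩⟩
instance : One (Hg X) := ⟨⟨0, 0⟩⟩
instance : Inv (Hg X) := ⟨fun g => ⟨-g.a, -g.b + bee X g.a g.a⟩⟩

variable {X}

@[simp] lemma Hg_mul_a (g h : Hg X) : (g * h).a = g.a + h.a := rfl
@[simp] lemma Hg_mul_b (g h : Hg X) : (g * h).b = g.b + h.b + bee X g.a h.a := rfl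
@[simp] lemma Hg_one_a : (1 : Hg X).a = 0 := rfl
@[simp] lemma Hg_one_b : (1 : Hg X).b = 0 := rfl
@[simp] lemma Hg_inv_a (g : Hg X) : (g⁻¹).a = -g.a := rfl
@[simp] lemma Hg_inv_b (g : Hg X) : (g⁻¹).b = -g.b + bee X g.a g.a := rfl
@[simp] lemma bee_apply (a c : X → ℤ) (p : P X) : bee X a c p = a p.1.1 * c p.1.2 := rfl

variable (X)

instance : Group (Hg X) where
  mul_assoc g h k := by
    ext p <;> simp <;> ring
  one_mul g := by ext p <;> simp
  mul_one g := by ext p <;> simp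
  inv_mul_cancel g := by ext p <;> simp <;> ring

variable {X}

lemma Hg_mul_zero (b d : P X → ℤ) :
    (⟨0, b⟩ : Hg X) * ⟨0, d⟩ = ⟨0, b + d⟩ := by
  ext p <;> simp

lemma Hg_commutator (g h : Hg X) :
    ⁅g, h⁆ = ⟨0, bee X g.a h.a - bee X h.a g.a⟩ := by
  rw [commutatorElement_def]
  ext p <;> simp <;> ring

lemma Hg_commutator_fst_eq_zero (g h : Hg X) : (⁅g, h⁆ : Hg X).a = 0 := by
  rw [Hg_commutator]

lemma Hg_comm_zero (g h : Hg X) (hg : g.a = 0) : ⁅g, h⁆ = 1 := by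
  rw [Hg_commutator]
  ext p <;> simp [hg]

variable (X)

def Kz : Subgroup (Hg X) where
  carrier := {g | g.a = 0}
  mul_mem' := by
    intro g h hg hh
    simp only [Set.mem_setOf_eq] at *
    simp [hg, hh]
  one_mem' := rfl
  inv_mem' := by
    intro g hg
    simp only [Set.mem_setOf_eq] at *
    simp [hg]

variable {X}

noncomputable def phi : FreeGroup X →* Hg X :=
  FreeGroup.lift fun x => ⟨(Pi.single x 1 : X → ℤ), 0⟩

lemma lcs1_eq : Subgroup.lowerCentralSeries (⊤ : Subgroup (FreeGroup X)) 1 = ⁅(⊤ : Subgroup (FreeGroup X)), ⊤⁆ := rfl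

lemma lcs2_eq : Subgroup.lowerCentralSeries (⊤ : Subgroup (FreeGroup X)) 2
    = ⁅Subgroup.lowerCentralSeries (⊤ : Subgroup (FreeGroup X)) 1, ⊤⁆ := rfl

lemma phi_lcs2 : ∀ g ∈ Subgroup.lowerCentralSeries (⊤ : Subgroup (FreeGroup X)) 2, phi g = 1 := by
  have hmap : Subgroup.map (phi (X := X)) (Subgroup.lowerCentralSeries (⊤ : Subgroup (FreeGroup X)) 2) ≤ ⊥ := by
    rw [lcs2_eq, lcs1_eq, Subgroup.map_commutator, Subgroup.map_commutator]
    have hK : ⁅Subgroup.map (phi (X := X)) ⊤, Subgroup.map (phi (X := X)) ⊤⁆ ≤ Kz X := by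
      rw [Subgroup.commutator_le]
      intro g₁ _ g₂ _
      exact Hg_commutator_fst_eq_zero g₁ g₂
    refine le_trans (Subgroup.commutator_mono hK le_top) ?_
    rw [Subgroup.commutator_le]
    intro g₁ hg₁ g₂ _
    simpa using Hg_comm_zero g₁ g₂ hg₁
  intro g hg
  simpa using hmap ⟨g, hg, rfl⟩

variable (X)

abbrev Q := FreeGroup X ⧸ Subgroup.lowerCentralSeries (⊤ : Subgroup (FreeGroup X)) 2

variable {X}

noncomputable abbrev qm : FreeGroup X →* Q X :=
  QuotientGroup.mk' (Subgroup.lowerCentralSeries (⊤ : Subgroup (FreeGroup X)) 2)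

noncomputable def chi : Q X →* Hg X :=
  QuotientGroup.lift _ phi (fun g hg => phi_lcs2 g hg)

lemma chi_qm (g : FreeGroup X) : chi (qm g) = phi g := rfl

lemma qm_comm (g h : FreeGroup X) : qm ⁅g, h⁆ = ⁅qm g, qm h⁆ := map_commutatorElement _ _ _

lemma comm_central (g h : FreeGroup X) (k : Q X) : Commute (qm ⁅g, h⁆) k := by
  obtain ⟨k', rfl⟩ := QuotientGroup.mk'_surjective _ k
  rw [← commutatorElement_eq_one_iff_commute]
  have he : ⁅qm ⁅g, h⁆, qm k'⁆ = qm ⁅⁅g, h⁆, k'⁆ := (qm_comm _ _).symm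
  rw [he]
  have hmem : ⁅⁅g, h⁆, k'⁆ ∈ Subgroup.lowerCentralSeries (⊤ : Subgroup (FreeGroup X)) 2 := by
    rw [lcs2_eq]
    refine Subgroup.commutator_mem_commutator ?_ (Subgroup.mem_top _)
    rw [lcs1_eq]
    exact Subgroup.commutator_mem_commutator (Subgroup.mem_top _) (Subgroup.mem_top _)
  exact (QuotientGroup.eq_one_iff _).2 hmem

lemma commQ_central (a b : Q X) (k : Q X) : Commute ⁅a, b⁆ k := by
  obtain ⟨g, rfl⟩ := QuotientGroup.mk'_surjective _ a
  obtain ⟨h, rfl⟩ := QuotientGroup.mk'_surjective _ b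
  rw [← qm_comm]
  exact comm_central g h k

lemma commQ_mul_left (a b c : Q X) : ⁅a * b, c⁆ = ⁅a, c⁆ * ⁅b, c⁆ := by
  have key : ⁅a * b, c⁆ = a * ⁅b, c⁆ * a⁻¹ * ⁅a, c⁆ := by
    simp only [commutatorElement_def]; group
  rw [key, ← (commQ_central b c a).eq, mul_inv_cancel_right, ← (commQ_central a c ⁅b, c⁆).eq]

lemma commQ_inv_left (a c : Q X) : ⁅a⁻¹, c⁆ = ⁅a, c⁆⁻¹ := by
  have key : ⁅a⁻¹, c⁆ = a⁻¹ * ⁅a, c⁆⁻¹ * a := by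
    simp only [commutatorElement_def]; group
  rw [key, ← ((commQ_central a c a).inv_left.inv_right).eq, mul_assoc, inv_mul_cancel, mul_one]

lemma comm_mul_left (g₁ g₂ h : FreeGroup X) :
    qm ⁅g₁ * g₂, h⁆ = qm ⁅g₁, h⁆ * qm ⁅g₂, h⁆ := by
  rw [qm_comm, qm_comm, qm_comm, map_mul, commQ_mul_left]

lemma comm_inv_left (g h : FreeGroup X) : qm ⁅g⁻¹, h⁆ = (qm ⁅g, h⁆)⁻¹ := by
  rw [qm_comm, qm_comm, map_inv, commQ_inv_left]

lemma comm_swap (g h : FreeGroup X) : qm ⁅g, h⁆ = (qm ⁅h, g⁆)⁻¹ := by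
  rw [← map_inv, commutatorElement_inv]

lemma comm_mul_right (g h₁ h₂ : FreeGroup X) :
    qm ⁅g, h₁ * h₂⁆ = qm ⁅g, h₁⁆ * qm ⁅g, h₂⁆ := by
  rw [comm_swap, comm_mul_left, mul_inv_rev, ← comm_swap, ← comm_swap]
  exact ((comm_central g h₂ (qm ⁅g, h₁⁆)).eq)

lemma comm_inv_right (g h : FreeGroup X) : qm ⁅g, h⁻¹⁆ = (qm ⁅g, h⁆)⁻¹ := by
  rw [comm_swap, comm_inv_left, ← comm_swap]

variable (X)

noncomputable def tg : P X → Q X := fun p => qm ⁅FreeGroup.of p.1.1, FreeGroup.of p.1.2⁆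

noncomputable def Ns : Subgroup (Q X) := Subgroup.closure (Set.range (tg X))

variable {X}

lemma comm_mem_Ns (g h : FreeGroup X) : qm ⁅g, h⁆ ∈ Ns X := by
  have base : ∀ x y : X, qm ⁅FreeGroup.of x, FreeGroup.of y⁆ ∈ Ns X := by
    intro x y
    rcases lt_trichotomy x y with hlt | heq | hgt
    · exact Subgroup.subset_closure ⟨⟨(x, y), hlt⟩, rfl⟩
    · subst heq
      have : ⁅FreeGroup.of x, FreeGroup.of x⁆ = 1 := by
        simp [commutatorElement_def, mul_assoc]
      rw [this, map_one]; exact one_mem _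
    · rw [comm_swap]
      exact inv_mem (Subgroup.subset_closure ⟨⟨(y, x), hgt⟩, rfl⟩)
  have hx : ∀ x : X, ∀ h : FreeGroup X, qm ⁅FreeGroup.of x, h⁆ ∈ Ns X := by
    intro x h
    induction h using FreeGroup.induction_on with
    | C1 =>
      have : ⁅FreeGroup.of x, (1 : FreeGroup X)⁆ = 1 := by
        simp [commutatorElement_def]
      rw [this, map_one]; exact one_mem _
    | of y => exact base x y
    | inv_of y ih => rw [comm_inv_right]; exact inv_mem ih
    | mul h₁ h₂ ih₁ ih₂ => rw [comm_mul_right]; exact mul_mem ih₁ ih₂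
  induction g using FreeGroup.induction_on with
  | C1 =>
    have : ⁅(1 : FreeGroup X), h⁆ = 1 := by simp [commutatorElement_def]
    rw [this, map_one]; exact one_mem _
  | of x => exact hx x h
  | inv_of x ih => rw [comm_inv_left]; exact inv_mem (hx x h)
  | mul g₁ g₂ ih₁ ih₂ => rw [comm_mul_left]; exact mul_mem ih₁ ih₂

variable (X)

noncomputable abbrev Msub : Subgroup (Q X) :=
  (Subgroup.lowerCentralSeries (⊤ : Subgroup (FreeGroup X)) 1).map (QuotientGroup.mk' (Subgroup.lowerCentralSeries (⊤ : Subgroup (FreeGroup X)) 2))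

lemma Msub_eq_Ns : Msub X = Ns X := by
  apply le_antisymm
  · show Subgroup.map qm (Subgroup.lowerCentralSeries (⊤ : Subgroup (FreeGroup X)) 1) ≤ _
    rw [lcs1_eq, Subgroup.map_commutator, Subgroup.commutator_le]
    rintro a ⟨g, -, rfl⟩ b ⟨h, -, rfl⟩
    rw [← qm_comm]
    exact comm_mem_Ns g h
  · rw [Ns, Subgroup.closure_le]
    rintro a ⟨p, rfl⟩
    refine ⟨⁅FreeGroup.of p.1.1, FreeGroup.of p.1.2⁆, ?_, rfl⟩
    rw [lcs1_eq]
    exact Subgroup.commutator_mem_commutator (Subgroup.mem_top _) (Subgroup.mem_top _)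

noncomputable def tgc : P X → Subgroup.center (Q X) := fun p =>
  ⟨tg X p, Subgroup.mem_center_iff.2 fun k =>
    ((comm_central (FreeGroup.of p.1.1) (FreeGroup.of p.1.2) k).symm).eq⟩

lemma tgc_coe (p : P X) : (tgc X p : Q X) = tg X p := rfl

noncomputable def psi0 : Multiplicative (P X → ℤ) →* Subgroup.center (Q X) :=
  MonoidHom.mk' (fun w => ∏ p : P X, (tgc X p) ^ (Multiplicative.toAdd w p)) (by
    intro w₁ w₂
    rw [← Finset.prod_mul_distrib]
    refine Finset.prod_congr rfl fun p _ => ?_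
    have h : Multiplicative.toAdd (w₁ * w₂) p
        = Multiplicative.toAdd w₁ p + Multiplicative.toAdd w₂ p := rfl
    rw [h, zpow_add])

noncomputable def psi : Multiplicative (P X → ℤ) →* Q X :=
  (Subgroup.center (Q X)).subtype.comp (psi0 X)

lemma psi_apply (w : Multiplicative (P X → ℤ)) :
    psi X w = ((∏ p : P X, (tgc X p) ^ (Multiplicative.toAdd w p) : Subgroup.center (Q X)) : Q X) :=
  rfl

lemma psi0_single (p : P X) : psi0 X (Multiplicative.ofAdd (Pi.single p 1)) = tgc X p := by
  show (∏ p' : P X, (tgc X p')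
      ^ (Multiplicative.toAdd (Multiplicative.ofAdd (Pi.single p 1)) p')) = tgc X p
  simp only [toAdd_ofAdd]
  rw [Finset.prod_eq_single p (fun p' _ hne => by rw [Pi.single_eq_of_ne hne, zpow_zero])
    (fun h => absurd (Finset.mem_univ p) h)]
  rw [Pi.single_eq_same, zpow_one]

lemma psi_single (p : P X) : psi X (Multiplicative.ofAdd (Pi.single p 1)) = tg X p := by
  show ((psi0 X (Multiplicative.ofAdd (Pi.single p 1)) : Subgroup.center (Q X)) : Q X) = tg X p
  rw [psi0_single]
  exact tgc_coe X p

lemma chi_tg (p : P X) :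
    chi (tg X p) = ⟨0, (Pi.single p 1 : P X → ℤ)⟩ := by
  rcases p with ⟨⟨x, y⟩, hxy⟩
  rw [tg, chi_qm, map_commutatorElement]
  have hx : phi (FreeGroup.of x) = ⟨(Pi.single x 1 : X → ℤ), 0⟩ := FreeGroup.lift_apply_of
  have hy : phi (FreeGroup.of y) = ⟨(Pi.single y 1 : X → ℤ), 0⟩ := FreeGroup.lift_apply_of
  rw [hx, hy, Hg_commutator]
  ext q
  · rfl
  rcases q with ⟨⟨u, v⟩, huv⟩
  simp only [Pi.sub_apply, bee_apply]
  rw [Pi.single_apply, Pi.single_apply, Pi.single_apply, Pi.single_apply, Pi.single_apply]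
  have hiff : ((⟨(u, v), huv⟩ : P X) = ⟨(x, y), hxy⟩) ↔ (u = x ∧ v = y) := by
    rw [Subtype.ext_iff, Prod.ext_iff]
  simp only [hiff]
  by_cases h1 : u = x
  · by_cases h2 : v = y
    · subst h1; subst h2
      have h3 : ¬ u = v := ne_of_lt huv
      have h4 : ¬ v = u := ne_of_gt huv
      simp [h3, h4]
    · subst h1
      have h4 : ¬ v = u := ne_of_gt huv
      simp [h2, h4]
  · by_cases h3 : u = y
    · by_cases h4 : v = x
      · exfalso
        subst h3; subst h4
        exact absurd hxy (lt_asymm huv)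
      · simp [h1, h4]
    · simp [h1, h3]

lemma Hg_zero_zpow (q : P X) (m : ℤ) :
    (⟨0, (Pi.single q 1 : P X → ℤ)⟩ : Hg X) ^ m = ⟨0, Pi.single q m⟩ := by
  have haux : ∀ m : ℤ, (⟨0, (Pi.single q 1 : P X → ℤ)⟩ : Hg X) ^ m
      = ⟨0, (m • Pi.single q 1 : P X → ℤ)⟩ := by
    intro m
    induction m using Int.induction_on with
    | zero => rw [zpow_zero, zero_smul]; rfl
    | succ k ihk =>
      rw [zpow_add, zpow_one, ihk, Hg_mul_zero]
      congr 1
      push_cast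
      simp [add_smul]
    | pred k ihk =>
      rw [sub_eq_add_neg, zpow_add, ihk]
      have h1 : (⟨0, (Pi.single q 1 : P X → ℤ)⟩ : Hg X) ^ (-1 : ℤ)
          = ⟨0, (-Pi.single q 1 : P X → ℤ)⟩ := by
        rw [zpow_neg, zpow_one]
        ext p <;> simp
      rw [h1, Hg_mul_zero]
      congr 1
      push_cast
      simp [add_smul, sub_eq_add_neg]
  rw [haux m]
  congr 1
  funext p'
  simp only [Pi.smul_apply, smul_eq_mul]
  by_cases h : p' = q
  · subst h; simp
  · simp [Pi.single_eq_of_ne h]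

lemma chi_psi (w : Multiplicative (P X → ℤ)) :
    chi (psi X w) = ⟨0, Multiplicative.toAdd w⟩ := by
  rw [psi_apply]
  have key : ∀ s : Finset (P X),
      chi ((∏ p ∈ s, (tgc X p) ^ (Multiplicative.toAdd w p) : Subgroup.center (Q X)) : Q X)
        = ⟨0, ∑ p ∈ s, Pi.single p (Multiplicative.toAdd w p)⟩ := by
    intro s
    induction s using Finset.induction_on with
    | empty =>
      simp only [Finset.prod_empty, Finset.sum_empty, OneMemClass.coe_one, map_one]
      rfl
    | insert _ _ hni ih =>
      rename_i q s'
      rw [Finset.prod_insert hni, Finset.sum_insert hni, Subgroup.coe_mul, map_mul,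
        Subgroup.coe_zpow, map_zpow, tgc_coe, chi_tg, ih, Hg_zero_zpow, Hg_mul_zero]
  rw [key Finset.univ]
  congr 1
  exact Finset.univ_sum_single _

lemma psi_injective : Function.Injective (psi X) := by
  intro w₁ w₂ h
  have h1 := congrArg chi h
  rw [chi_psi, chi_psi] at h1
  have h2 := congrArg Hg.b h1
  exact Multiplicative.toAdd.injective h2

lemma psi_range_mem (w : Multiplicative (P X → ℤ)) : psi X w ∈ Msub X := by
  rw [Msub_eq_Ns, psi_apply]
  have key : ∀ s : Finset (P X),
      ((∏ p ∈ s, (tgc X p) ^ (Multiplicative.toAdd w p) : Subgroup.center (Q X)) : Q X) ∈ Ns X := by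
    intro s
    induction s using Finset.induction_on with
    | empty => simp only [Finset.prod_empty, OneMemClass.coe_one]; exact one_mem _
    | insert _ _ hni ih =>
      rename_i q s'
      rw [Finset.prod_insert hni, Subgroup.coe_mul, Subgroup.coe_zpow, tgc_coe]
      exact mul_mem (Subgroup.zpow_mem _ (Subgroup.subset_closure (Set.mem_range_self q)) _) ih
  exact key Finset.univ

noncomputable def psiM : Multiplicative (P X → ℤ) →* Msub X :=
  (psi X).codRestrict _ (psi_range_mem X)

lemma psiM_bijective : Function.Bijective (psiM X) := by
  constructor
  · intro w₁ w₂ h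
    have h'' : ((psiM X w₁ : Msub X) : Q X) = ((psiM X w₂ : Msub X) : Q X) :=
      congrArg Subtype.val h
    have h' : psi X w₁ = psi X w₂ := h''
    exact psi_injective X h'
  · rintro ⟨m, hm⟩
    rw [Msub_eq_Ns] at hm
    have hle : Ns X ≤ (psi X).range := by
      rw [Ns, Subgroup.closure_le]
      rintro a ⟨p, rfl⟩
      exact ⟨Multiplicative.ofAdd (Pi.single p 1), psi_single X p⟩
    obtain ⟨w, hw⟩ := hle hm
    exact ⟨w, Subtype.ext hw⟩

end Stmt14Aux

open Stmt14Aux in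
/-- For the free group `F` on a finite linearly ordered set `X`, the quotient
`[F,F]/[F,[F,F]]` (realized as the image of `[F,F] = lowerCentralSeries F 1` in
`F / lowerCentralSeries F 2`) is free abelian with basis the classes of the commutators
`[x,y]` for `x < y`; in particular its rank is `C(|X|,2)`. -/
theorem stmt14 (X : Type) [Fintype X] [LinearOrder X] :
    (∃ e : Multiplicative ({p : X × X // p.1 < p.2} → ℤ) ≃*
        ((Subgroup.lowerCentralSeries (⊤ : Subgroup (FreeGroup X)) 1).map
          (QuotientGroup.mk' (Subgroup.lowerCentralSeries (⊤ : Subgroup (FreeGroup X)) 2))),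
      ∀ (x y : X) (h : x < y),
        ((e (Multiplicative.ofAdd (Pi.single (⟨(x, y), h⟩ : {p : X × X // p.1 < p.2}) 1)) :
            ((Subgroup.lowerCentralSeries (⊤ : Subgroup (FreeGroup X)) 1).map
              (QuotientGroup.mk' (Subgroup.lowerCentralSeries (⊤ : Subgroup (FreeGroup X)) 2)))) :
            FreeGroup X ⧸ Subgroup.lowerCentralSeries (⊤ : Subgroup (FreeGroup X)) 2)
          = QuotientGroup.mk ⁅FreeGroup.of x, FreeGroup.of y⁆) ∧
    Nat.card {p : X × X // p.1 < p.2} = (Fintype.card X).choose 2 := by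
  constructor
  · refine ⟨MulEquiv.ofBijective (psiM X) (psiM_bijective X), ?_⟩
    intro x y h
    have h1 : ((MulEquiv.ofBijective (psiM X) (psiM_bijective X))
        (Multiplicative.ofAdd (Pi.single (⟨(x, y), h⟩ : P X) 1)) : Q X)
        = psi X (Multiplicative.ofAdd (Pi.single (⟨(x, y), h⟩ : P X) 1)) := rfl
    rw [h1, psi_single]
    rfl
  · classical
    have hcard : Nat.card {p : X × X // p.1 < p.2}
        = (Finset.univ.filter fun p : X × X => p.1 < p.2).card := by
      rw [Nat.card_eq_fintype_card, Fintype.card_subtype]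
    set A := Finset.univ.filter fun p : X × X => p.1 < p.2 with hA
    set B := Finset.univ.filter fun p : X × X => p.2 < p.1 with hB
    have hmemA : ∀ p : X × X, p ∈ A ↔ p.1 < p.2 := by
      intro p; rw [hA, Finset.mem_filter]; simp
    have hmemB : ∀ p : X × X, p ∈ B ↔ p.2 < p.1 := by
      intro p; rw [hB, Finset.mem_filter]; simp
    have hAB : A.card = B.card := by
      refine Finset.card_bij (fun p _ => (p.2, p.1)) ?_ ?_ ?_
      · intro p hp
        rw [hmemB]
        exact (hmemA p).1 hp
      · intro p _ p' _ hpp'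
        have h1 := congrArg Prod.fst hpp'
        have h2 := congrArg Prod.snd hpp'
        exact Prod.ext h2 h1
      · intro p hp
        refine ⟨(p.2, p.1), ?_, rfl⟩
        rw [hmemA]
        exact (hmemB p).1 hp
    have hunion : A ∪ B = (Finset.univ : Finset (X × X)).filter (fun p => p.1 ≠ p.2) := by
      ext p
      rw [Finset.mem_union, hmemA, hmemB, Finset.mem_filter]
      constructor
      · rintro (h | h)
        · exact ⟨Finset.mem_univ _, ne_of_lt h⟩
        · exact ⟨Finset.mem_univ _, ne_of_gt h⟩
      · rintro ⟨-, hne⟩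
        exact lt_or_gt_of_ne hne
    have hoff : (Finset.univ : Finset (X × X)).filter (fun p => p.1 ≠ p.2)
        = (Finset.univ : Finset X).offDiag := by
      ext p
      rw [Finset.mem_filter, Finset.mem_offDiag]
      simp
    have hdisj : Disjoint A B := by
      rw [Finset.disjoint_left]
      intro p hp hp'
      exact absurd ((hmemA p).1 hp) (lt_asymm ((hmemB p).1 hp'))
    have hsum : A.card + B.card = Fintype.card X * Fintype.card X - Fintype.card X := by
      rw [← Finset.card_union_of_disjoint hdisj, hunion, hoff, Finset.offDiag_card,
        Finset.card_univ]
    have hn : Fintype.card X * Fintype.card X - Fintype.card X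
        = Fintype.card X * (Fintype.card X - 1) := by
      cases hcx : Fintype.card X with
      | zero => simp
      | succ k =>
        have h5 : (k + 1) * (k + 1) = (k + 1) * k + (k + 1) := by ring
        rw [h5, Nat.add_sub_cancel, Nat.add_sub_cancel]
    rw [hcard, Nat.choose_two_right]
    rw [hn, hAB] at hsum
    set m := Fintype.card X * (Fintype.card X - 1) with hm
    omega
end

section
/- Let F be the free group on a finite set X and let R be the normal closure in F of a set C of commutators [x, y] of pairs of distinct generators x, y ∈ X. Then the homomorphism Φ: R/[F,R] → [F,F]/[F,[F,F]] induced by the inclusion R ⊆ [F,F] is injective. -/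
open scoped commutatorElement
open scoped IsMulCommutative

namespace Stmt15Aux

@[ext] structure Heis where
  a : ℤ
  b : ℤ
  c : ℤ

namespace Heis

instance : Mul Heis := ⟨fun p q => ⟨p.a + q.a, p.b + q.b, p.c + q.c + p.a * q.b⟩⟩
instance : One Heis := ⟨⟨0, 0, 0⟩⟩
instance : Inv Heis := ⟨fun p => ⟨-p.a, -p.b, -p.c + p.a * p.b⟩⟩

@[simp] lemma mul_a (p q : Heis) : (p * q).a = p.a + q.a := rfl
@[simp] lemma mul_b (p q : Heis) : (p * q).b = p.b + q.b := rfl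
@[simp] lemma mul_c (p q : Heis) : (p * q).c = p.c + q.c + p.a * q.b := rfl
@[simp] lemma one_a : (1 : Heis).a = 0 := rfl
@[simp] lemma one_b : (1 : Heis).b = 0 := rfl
@[simp] lemma one_c : (1 : Heis).c = 0 := rfl
@[simp] lemma inv_a (p : Heis) : p⁻¹.a = -p.a := rfl
@[simp] lemma inv_b (p : Heis) : p⁻¹.b = -p.b := rfl
@[simp] lemma inv_c (p : Heis) : p⁻¹.c = -p.c + p.a * p.b := rfl

instance : Group Heis where
  mul_assoc p q r := by ext <;> simp <;> ring
  one_mul p := by ext <;> simp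
  mul_one p := by ext <;> simp
  inv_mul_cancel p := by ext <;> simp <;> ring

lemma mem_center_of {g : Heis} (ha : g.a = 0) (hb : g.b = 0) :
    g ∈ Subgroup.center Heis := by
  rw [Subgroup.mem_center_iff]
  intro h
  ext <;> simp [ha, hb, add_comm]

lemma a_eq_zero_of_center {g : Heis} (h : g ∈ Subgroup.center Heis) : g.a = 0 := by
  have h2 := congrArg Heis.c (Subgroup.mem_center_iff.mp h ⟨0, 1, 0⟩)
  simpa using h2

lemma b_eq_zero_of_center {g : Heis} (h : g ∈ Subgroup.center Heis) : g.b = 0 := by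
  have h2 := congrArg Heis.c (Subgroup.mem_center_iff.mp h ⟨1, 0, 0⟩)
  simp at h2
  linarith

lemma commutator_eq (g h : Heis) :
    ⁅g, h⁆ = ⟨0, 0, g.a * h.b - h.a * g.b⟩ := by
  rw [commutatorElement_def]
  ext <;> simp <;> ring

lemma commutator_mem_center (g h : Heis) : ⁅g, h⁆ ∈ Subgroup.center Heis := by
  rw [commutator_eq]; exact mem_center_of rfl rfl

lemma lcs_two : (⊤ : Subgroup Heis).lowerCentralSeries 2 = ⊥ := by
  have h1 : (⊤ : Subgroup Heis).lowerCentralSeries 1 ≤ Subgroup.center Heis := by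
    rw [Subgroup.lowerCentralSeries_succ, Subgroup.lowerCentralSeries_zero]
    exact Subgroup.commutator_le.mpr fun g _ h _ => commutator_mem_center g h
  rw [Subgroup.lowerCentralSeries_succ, eq_bot_iff]
  refine le_trans (Subgroup.commutator_mono h1 le_rfl) ?_
  refine Subgroup.commutator_le.mpr fun g hg h _ => ?_
  rw [Subgroup.mem_bot, commutatorElement_eq_one_iff_mul_comm]
  exact Subgroup.mem_center_iff.mp hg h |>.symm

end Heis


variable {X : Type} [DecidableEq X]

/-- The Heisenberg detector homomorphism attached to an ordered pair of generators. -/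
noncomputable def theta (p : X × X) : FreeGroup X →* Heis :=
  FreeGroup.lift fun x => if x = p.1 then ⟨1, 0, 0⟩ else if x = p.2 then ⟨0, 1, 0⟩ else 1

lemma theta_of (p : X × X) (x : X) :
    theta p (FreeGroup.of x) =
      if x = p.1 then ⟨1, 0, 0⟩ else if x = p.2 then ⟨0, 1, 0⟩ else 1 :=
  FreeGroup.lift_apply_of

lemma theta_comm_c (p : X × X) (hp : p.1 ≠ p.2) {u v : X} (huv : u ≠ v) :
    (theta p ⁅FreeGroup.of u, FreeGroup.of v⁆).c =
      (if u = p.1 ∧ v = p.2 then 1 else 0) - (if v = p.1 ∧ u = p.2 then 1 else 0) := by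
  rw [map_commutatorElement, Heis.commutator_eq, theta_of, theta_of]
  split_ifs <;> simp_all

end Stmt15Aux


open Stmt15Aux

/-- Let `F` be the free group on a finite set `X` and `R` the normal closure of a set `C`
of commutators of pairs of distinct generators. Then the homomorphism
`Φ : R/[F,R] → [F,F]/[F,[F,F]]` induced by the inclusion `R ⊆ [F,F]` is injective;
equivalently (triviality of its kernel), every element of `R` lying in
`[F,[F,F]] = lowerCentralSeries F 2` already lies in `[F,R]`. -/
theorem stmt15 (X : Type) [Fintype X] (C : Set (FreeGroup X))
    (hC : ∀ r ∈ C, ∃ x y : X, x ≠ y ∧ r = ⁅FreeGroup.of x, FreeGroup.of y⁆) :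
    ∀ g ∈ Subgroup.normalClosure C,
      g ∈ (⊤ : Subgroup (FreeGroup X)).lowerCentralSeries 2 →
      g ∈ ⁅(⊤ : Subgroup (FreeGroup X)), Subgroup.normalClosure C⁆ := by
  classical
  letI : LinearOrder X := linearOrderOfSTO WellOrderingRel
  intro g hg hg2
  set R : Subgroup (FreeGroup X) := Subgroup.normalClosure C with hR
  set N : Subgroup (FreeGroup X) := ⁅(⊤ : Subgroup (FreeGroup X)), R⁆ with hN
  haveI hNn : N.Normal := Subgroup.commutator_normal ⊤ R
  let π : FreeGroup X →* FreeGroup X ⧸ N := QuotientGroup.mk' N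
  have hcomm1 : ∀ (a r : FreeGroup X), r ∈ R → π ⁅a, r⁆ = 1 := by
    intro a r hr
    show ((⁅a, r⁆ : FreeGroup X) : FreeGroup X ⧸ N) = 1
    rw [QuotientGroup.eq_one_iff]
    exact Subgroup.commutator_mem_commutator (Subgroup.mem_top a) hr
  have hcen : ∀ r ∈ R, π r ∈ Subgroup.center (FreeGroup X ⧸ N) := by
    intro r hr
    rw [Subgroup.mem_center_iff]
    intro q
    obtain ⟨a, rfl⟩ := QuotientGroup.mk'_surjective N q
    have key : a * r = ⁅a, r⁆ * (r * a) := by group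
    calc QuotientGroup.mk' N a * π r = π (a * r) := (map_mul π a r).symm
      _ = π ⁅a, r⁆ * π (r * a) := by rw [key, map_mul]
      _ = π (r * a) := by rw [hcomm1 a r hr, one_mul]
      _ = π r * QuotientGroup.mk' N a := map_mul π r a
  let s : Finset (X × X) := Finset.univ.filter
    (fun p => p.1 < p.2 ∧ (⁅FreeGroup.of p.1, FreeGroup.of p.2⁆ ∈ C ∨
      ⁅FreeGroup.of p.2, FreeGroup.of p.1⁆ ∈ C))
  have hs_lt : ∀ p ∈ s, p.1 < p.2 := fun p hp => (Finset.mem_filter.mp hp).2.1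
  have hsR : ∀ p ∈ s, ⁅FreeGroup.of p.1, FreeGroup.of p.2⁆ ∈ R := by
    intro p hp
    rcases (Finset.mem_filter.mp hp).2.2 with h | h
    · exact Subgroup.subset_normalClosure h
    · have h2 := R.inv_mem (Subgroup.subset_normalClosure h)
      rwa [commutatorElement_inv] at h2
  let zc : X × X → ↥(Subgroup.center (FreeGroup X ⧸ N)) := fun p =>
    if h : π ⁅FreeGroup.of p.1, FreeGroup.of p.2⁆ ∈ Subgroup.center (FreeGroup X ⧸ N)
    then ⟨_, h⟩ else 1
  have hzc : ∀ p ∈ s, (zc p : FreeGroup X ⧸ N) = π ⁅FreeGroup.of p.1, FreeGroup.of p.2⁆ := by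
    intro p hp
    have h := hcen _ (hsR p hp)
    simp only [zc, dif_pos h]
  -- the key computation for a single commutator generator
  have hgen : ∀ u v : X, u ≠ v → ⁅FreeGroup.of u, FreeGroup.of v⁆ ∈ C →
      π ⁅FreeGroup.of u, FreeGroup.of v⁆ =
        ↑(∏ p ∈ s, zc p ^ (theta p ⁅FreeGroup.of u, FreeGroup.of v⁆).c) := by
    intro u v huv hcC
    rcases lt_trichotomy u v with hlt | heq | hgt
    · have hq : (u, v) ∈ s :=
        Finset.mem_filter.mpr ⟨Finset.mem_univ _, hlt, Or.inl hcC⟩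
      rw [Finset.prod_eq_single_of_mem (u, v) hq ?_]
      · have hc1 : (theta (u, v) ⁅FreeGroup.of u, FreeGroup.of v⁆).c = 1 := by
          rw [theta_comm_c (u, v) (ne_of_lt hlt) huv,
            if_pos ⟨rfl, rfl⟩, if_neg (fun h => huv h.1.symm)]
          ring
        rw [hc1, zpow_one, hzc _ hq]
      · intro p hp hne
        have hp12 := hs_lt p hp
        rw [theta_comm_c p (ne_of_lt hp12) huv, if_neg, if_neg]
        · simp
        · rintro ⟨h1, h2⟩
          rw [← h1, ← h2] at hp12
          exact absurd hp12 (lt_asymm hlt)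
        · rintro ⟨h1, h2⟩
          exact hne (Prod.ext h1.symm h2.symm)
    · exact absurd heq huv
    · have hq : (v, u) ∈ s :=
        Finset.mem_filter.mpr ⟨Finset.mem_univ _, hgt, Or.inr hcC⟩
      rw [Finset.prod_eq_single_of_mem (v, u) hq ?_]
      · have hc1 : (theta (v, u) ⁅FreeGroup.of u, FreeGroup.of v⁆).c = -1 := by
          rw [theta_comm_c (v, u) (ne_of_lt hgt) huv,
            if_neg (fun h => huv h.1), if_pos ⟨rfl, rfl⟩]
          ring
        rw [hc1, zpow_neg_one]
        calc π ⁅FreeGroup.of u, FreeGroup.of v⁆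
            = π (⁅FreeGroup.of v, FreeGroup.of u⁆⁻¹) := by rw [commutatorElement_inv]
          _ = (π ⁅FreeGroup.of v, FreeGroup.of u⁆)⁻¹ := map_inv π _
          _ = ((zc (v, u))⁻¹ : FreeGroup X ⧸ N) := by rw [hzc _ hq]
      · intro p hp hne
        have hp12 := hs_lt p hp
        rw [theta_comm_c p (ne_of_lt hp12) huv, if_neg, if_neg]
        · simp
        · rintro ⟨h1, h2⟩
          exact hne (Prod.ext h1.symm h2.symm)
        · rintro ⟨h1, h2⟩
          rw [← h1, ← h2] at hp12
          exact absurd hp12 (lt_asymm hgt)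
  -- main inductive claim
  have main : ∀ r ∈ R, (∀ p : X × X, theta p r ∈ Subgroup.center Heis) ∧
      π r = ↑(∏ p ∈ s, zc p ^ (theta p r).c) := by
    intro r hr
    refine Subgroup.closure_induction ?_ ?_ ?_ ?_ hr
    · -- conjugates of generators
      intro x hx
      rw [Group.mem_conjugatesOfSet_iff] at hx
      obtain ⟨c0, hc0, hconj⟩ := hx
      obtain ⟨a, rfl⟩ := isConj_iff.mp hconj
      obtain ⟨u, v, huv, rfl⟩ := hC c0 hc0
      have hthc : ∀ p : X × X,
          theta p ⁅FreeGroup.of u, FreeGroup.of v⁆ ∈ Subgroup.center Heis := by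
        intro p
        rw [map_commutatorElement]
        exact Heis.commutator_mem_center _ _
      have hth : ∀ p : X × X,
          theta p (a * ⁅FreeGroup.of u, FreeGroup.of v⁆ * a⁻¹) =
            theta p ⁅FreeGroup.of u, FreeGroup.of v⁆ := by
        intro p
        rw [map_mul, map_mul, map_inv]
        rw [Subgroup.mem_center_iff.mp (hthc p) (theta p a)]
        rw [mul_inv_cancel_right]
      have hπ : π (a * ⁅FreeGroup.of u, FreeGroup.of v⁆ * a⁻¹) =
          π ⁅FreeGroup.of u, FreeGroup.of v⁆ := by
        have key : a * ⁅FreeGroup.of u, FreeGroup.of v⁆ * a⁻¹ =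
            ⁅a, ⁅FreeGroup.of u, FreeGroup.of v⁆⁆ * ⁅FreeGroup.of u, FreeGroup.of v⁆ := by
          group
        rw [key, map_mul, hcomm1 a _ (Subgroup.subset_normalClosure hc0), one_mul]
      constructor
      · intro p
        rw [hth p]
        exact hthc p
      · rw [hπ, hgen u v huv hc0]
        congr 1
        refine Finset.prod_congr rfl fun p _ => ?_
        rw [hth p]
    · -- one
      refine ⟨fun p => by rw [map_one]; exact Subgroup.one_mem _, ?_⟩
      rw [map_one]
      have : ∏ p ∈ s, zc p ^ (theta p (1 : FreeGroup X)).c = 1 :=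
        Finset.prod_eq_one fun p _ => by rw [map_one]; simp
      rw [this, Subgroup.coe_one]
    · -- mul
      intro x y hx hy ihx ihy
      obtain ⟨hxc, hxe⟩ := ihx
      obtain ⟨hyc, hye⟩ := ihy
      refine ⟨fun p => by rw [map_mul]; exact Subgroup.mul_mem _ (hxc p) (hyc p), ?_⟩
      have hcc : ∀ p : X × X, (theta p (x * y)).c = (theta p x).c + (theta p y).c := by
        intro p
        rw [map_mul, Heis.mul_c, Heis.a_eq_zero_of_center (hxc p)]
        ring
      calc π (x * y) = π x * π y := map_mul π x y
        _ = ↑((∏ p ∈ s, zc p ^ (theta p x).c) * ∏ p ∈ s, zc p ^ (theta p y).c) := by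
            rw [hxe, hye]; rfl
        _ = ↑(∏ p ∈ s, zc p ^ ((theta p x).c + (theta p y).c)) := by
            rw [← Finset.prod_mul_distrib]
            congr 1
            exact Finset.prod_congr rfl fun p _ => (zpow_add (zc p) _ _).symm
        _ = ↑(∏ p ∈ s, zc p ^ (theta p (x * y)).c) := by
            congr 1
            exact Finset.prod_congr rfl fun p _ => by rw [hcc p]
    · -- inv
      intro x hx ihx
      obtain ⟨hxc, hxe⟩ := ihx
      refine ⟨fun p => by rw [map_inv]; exact Subgroup.inv_mem _ (hxc p), ?_⟩
      have hcc : ∀ p : X × X, (theta p x⁻¹).c = -(theta p x).c := by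
        intro p
        rw [map_inv, Heis.inv_c, Heis.a_eq_zero_of_center (hxc p)]
        ring
      calc π x⁻¹ = (π x)⁻¹ := map_inv π x
        _ = ↑((∏ p ∈ s, zc p ^ (theta p x).c)⁻¹) := by rw [hxe]; rfl
        _ = ↑(∏ p ∈ s, zc p ^ (-(theta p x).c)) := by
            rw [← Finset.prod_inv_distrib]
            congr 1
            exact Finset.prod_congr rfl fun p _ => (zpow_neg (zc p) _).symm
        _ = ↑(∏ p ∈ s, zc p ^ (theta p x⁻¹).c) := by
            congr 1
            exact Finset.prod_congr rfl fun p _ => by rw [hcc p]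
  obtain ⟨hcent, heq⟩ := main g hg
  have hz : ∀ p : X × X, theta p g = 1 := by
    intro p
    have hmem : theta p g ∈ (⊤ : Subgroup Heis).lowerCentralSeries 2 :=
      Subgroup.lowerCentralSeries.map (theta p) 2 (Subgroup.mem_map_of_mem _ hg2)
    rwa [Heis.lcs_two, Subgroup.mem_bot] at hmem
  have hπg : π g = 1 := by
    rw [heq]
    have : ∏ p ∈ s, zc p ^ (theta p g).c = 1 :=
      Finset.prod_eq_one fun p _ => by rw [hz p]; simp
    rw [this, Subgroup.coe_one]
  exact (QuotientGroup.eq_one_iff g).mp hπg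
end
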